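/- Let P be a compact hypercube in ℝ^m and let K : P × P → [0,∞) be a kernel with bandwidth h > 0 satisfying: (a) ∫_P K(x,y) dy = 1 for every x ∈ P; (b) K(x,y) = 0 whenever ‖x−y‖ > h; (c) for every x ∈ P the map y ↦ K(x,y) is Lipschitz with constant L; (d) for every y the map x ↦ K(x,y) is continuously differentiable and for every x and every i ∈ {1,…,m} the map y ↦ ∂K/∂x_i(x,y) is Lipschitz with constant L′. Let ξ be a probability measure on P whose density ρ is continuously differentiable with each partial derivative ∂_iρ Lipschitz, and suppose the integration-by-parts identity ∫_P ∂_{x_i}K(x,y) ρ(y) dy = ∫_P K(x,y) ∂_iρ(y) dy holds for every x ∈ P and every i. Let ν̂ be any probability measure on P and set p̃(x) = ∫_P K(x,y) dν̂(y). Then for every x in the interior of P, ‖∇p̃(x) − ∇ρ(x)‖ ≤ m · L′ · W₁(ν̂, ξ) + m · h · ‖∇ρ‖_Lip, where ‖∇ρ‖_Lip = max_i ‖∂_iρ‖_Lip. -/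

import Mathlib

open MeasureTheory

/-- Kantorovich–Rubinstein (Wasserstein-1) distance: infimum over couplings of
`∫ dist x y dπ`. -/
noncomputable def W1 {X : Type*} [MeasurableSpace X] [PseudoMetricSpace X]
    (μ ν : Measure X) : ℝ :=
  sInf {r : ℝ | ∃ π : Measure (X × X),
    π.map Prod.fst = μ ∧ π.map Prod.snd = ν ∧ r = ∫ p, dist p.1 p.2 ∂π}

lemma aux_abs_coord_le {m : ℕ} (v : EuclideanSpace ℝ (Fin m)) (i : Fin m) : |v i| ≤ ‖v‖ := by
  have h := abs_real_inner_le_norm (EuclideanSpace.single i (1:ℝ)) v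
  rw [EuclideanSpace.inner_single_left] at h
  simpa [EuclideanSpace.norm_single] using h

lemma aux_sum_single {m : ℕ} (v : EuclideanSpace ℝ (Fin m)) :
    ∑ i, v i • EuclideanSpace.single i (1:ℝ) = v := by
  have := (EuclideanSpace.basisFun (Fin m) ℝ).toBasis.sum_repr v
  simpa [EuclideanSpace.basisFun_apply] using this

lemma aux_opnorm_le {m : ℕ} (T : EuclideanSpace ℝ (Fin m) →L[ℝ] ℝ) {C : ℝ}
    (hC : 0 ≤ C) (hT : ∀ i, |T (EuclideanSpace.single i 1)| ≤ C) : ‖T‖ ≤ m * C := by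
  refine T.opNorm_le_bound (by positivity) (fun v => ?_)
  conv_lhs => rw [show v = ∑ i, v i • EuclideanSpace.single i (1:ℝ) from (aux_sum_single v).symm]
  rw [map_sum]
  calc ‖∑ i, T (v i • EuclideanSpace.single i 1)‖
      ≤ ∑ i : Fin m, ‖T (v i • EuclideanSpace.single i 1)‖ := norm_sum_le _ _
    _ ≤ ∑ _i : Fin m, C * ‖v‖ := by
        refine Finset.sum_le_sum fun i _ => ?_
        rw [_root_.map_smul]
        simp only [smul_eq_mul, Real.norm_eq_abs, abs_mul]
        calc |v i| * |T (EuclideanSpace.single i 1)| ≤ ‖v‖ * C :=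
          mul_le_mul (aux_abs_coord_le v i) (hT i) (abs_nonneg _) (norm_nonneg _)
        _ = C * ‖v‖ := mul_comm _ _
    _ = m * C * ‖v‖ := by simp [Finset.sum_const, mul_assoc]

/-- Decomposition of a real functional on Euclidean space over the coordinate basis. -/
lemma aux_clm_decomp {m : ℕ} (T : EuclideanSpace ℝ (Fin m) →L[ℝ] ℝ) :
    T = ∑ i, T (EuclideanSpace.single i 1) • (EuclideanSpace.proj i :
      EuclideanSpace ℝ (Fin m) →L[ℝ] ℝ) := by
  ext v
  rw [ContinuousLinearMap.sum_apply]
  conv_lhs => rw [show v = ∑ i, v i • EuclideanSpace.single i (1:ℝ) from (aux_sum_single v).symm]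
  rw [map_sum]
  refine Finset.sum_congr rfl fun i _ => ?_
  simp [mul_comm]

lemma aux_W1_nonneg {X : Type*} [MeasurableSpace X] [PseudoMetricSpace X]
    (μ ν : Measure X) : 0 ≤ W1 μ ν := by
  apply Real.sInf_nonneg
  rintro r ⟨π, -, -, rfl⟩
  exact integral_nonneg fun p => dist_nonneg

lemma aux_coupling_bound {X : Type*} [MeasurableSpace X] [MetricSpace X]
    [SecondCountableTopology X] [BorelSpace X]
    {P : Set X} (hPm : MeasurableSet P)
    {Cd : ℝ} (hdiam : ∀ y ∈ P, ∀ z ∈ P, dist y z ≤ Cd)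
    (μ ν : Measure X) [IsProbabilityMeasure μ] [IsProbabilityMeasure ν]
    (hμ : μ Pᶜ = 0) (hν : ν Pᶜ = 0)
    {f : X → ℝ} {c : NNReal} (hf : LipschitzOnWith c f P) :
    |(∫ y, f y ∂μ) - ∫ y, f y ∂ν| ≤ c * W1 μ ν := by
  obtain ⟨g, hg, hfg⟩ := hf.extend_real
  obtain ⟨y₀, hy₀⟩ : P.Nonempty := by
    by_contra hne
    rw [Set.not_nonempty_iff_eq_empty] at hne
    rw [hne, Set.compl_empty, measure_univ] at hμ
    exact one_ne_zero hμ
  set B : ℝ := |g y₀| + c * Cd with hB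
  have hgB : ∀ y ∈ P, ‖g y‖ ≤ B := by
    intro y hy
    have h1 : dist (g y) (g y₀) ≤ c * dist y y₀ := hg.dist_le_mul y y₀
    have h2 : dist y y₀ ≤ Cd := hdiam y hy y₀ hy₀
    have h3 : (c : ℝ) * dist y y₀ ≤ c * Cd := mul_le_mul_of_nonneg_left h2 c.coe_nonneg
    calc ‖g y‖ = |g y| := rfl
      _ ≤ |g y₀| + dist (g y) (g y₀) := by
          rw [Real.dist_eq]
          linarith [abs_sub_abs_le_abs_sub (g y) (g y₀)]
      _ ≤ B := by rw [hB]; linarith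
  have hμae : ∀ᵐ y ∂μ, y ∈ P := by rw [ae_iff]; exact hμ
  have hνae : ∀ᵐ y ∂ν, y ∈ P := by rw [ae_iff]; exact hν
  have hμeq : ∫ y, f y ∂μ = ∫ y, g y ∂μ :=
    integral_congr_ae (by filter_upwards [hμae] with y hy using hfg hy)
  have hνeq : ∫ y, f y ∂ν = ∫ y, g y ∂ν :=
    integral_congr_ae (by filter_upwards [hνae] with y hy using hfg hy)
  rw [hμeq, hνeq]
  set S : Set ℝ := {r : ℝ | ∃ π : Measure (X × X),
    π.map Prod.fst = μ ∧ π.map Prod.snd = ν ∧ r = ∫ p, dist p.1 p.2 ∂π} with hS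
  have hSne : S.Nonempty := by
    refine ⟨∫ p, dist p.1 p.2 ∂(μ.prod ν), μ.prod ν, ?_, ?_, rfl⟩
    · simp [measure_univ]
    · simp [measure_univ]
  have hkey : ∀ r ∈ S, |(∫ y, g y ∂μ) - ∫ y, g y ∂ν| ≤ c * r := by
    rintro r ⟨π, hπ1, hπ2, rfl⟩
    have hπ1' : π (Prod.fst ⁻¹' Pᶜ) = 0 := by
      rw [← Measure.map_apply measurable_fst hPm.compl, hπ1]; exact hμ
    have hπ2' : π (Prod.snd ⁻¹' Pᶜ) = 0 := by
      rw [← Measure.map_apply measurable_snd hPm.compl, hπ2]; exact hν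
    have hπprob : IsProbabilityMeasure π := by
      constructor
      have hu := Measure.map_apply (f := Prod.fst) (μ := π) measurable_fst MeasurableSet.univ
      rw [hπ1, measure_univ, Set.preimage_univ] at hu
      exact hu.symm
    have hae1 : ∀ᵐ p : X × X ∂π, p.1 ∈ P := by rw [ae_iff]; exact hπ1'
    have hae2 : ∀ᵐ p : X × X ∂π, p.2 ∈ P := by rw [ae_iff]; exact hπ2'
    have int1 : Integrable (fun p : X × X => g p.1) π := by
      refine (integrable_const B).mono'
        (hg.continuous.comp continuous_fst).aestronglyMeasurable ?_
      filter_upwards [hae1] with p hp using hgB _ hp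
    have int2 : Integrable (fun p : X × X => g p.2) π := by
      refine (integrable_const B).mono'
        (hg.continuous.comp continuous_snd).aestronglyMeasurable ?_
      filter_upwards [hae2] with p hp using hgB _ hp
    have intd : Integrable (fun p : X × X => dist p.1 p.2) π := by
      refine (integrable_const Cd).mono'
        (continuous_fst.dist continuous_snd).aestronglyMeasurable ?_
      filter_upwards [hae1, hae2] with p hp1 hp2
      rw [Real.norm_eq_abs, abs_of_nonneg dist_nonneg]
      exact hdiam _ hp1 _ hp2
    have e1 : ∫ y, g y ∂μ = ∫ p : X × X, g p.1 ∂π := by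
      rw [← hπ1, integral_map measurable_fst.aemeasurable hg.continuous.aestronglyMeasurable]
    have e2 : ∫ y, g y ∂ν = ∫ p : X × X, g p.2 ∂π := by
      rw [← hπ2, integral_map measurable_snd.aemeasurable hg.continuous.aestronglyMeasurable]
    rw [e1, e2, ← integral_sub int1 int2]
    calc |∫ p : X × X, (g p.1 - g p.2) ∂π| ≤ ∫ p : X × X, |g p.1 - g p.2| ∂π := by
          simpa [Real.norm_eq_abs] using
            norm_integral_le_integral_norm (μ := π) (fun p : X × X => g p.1 - g p.2)
      _ ≤ ∫ p : X × X, (c : ℝ) * dist p.1 p.2 ∂π := by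
          refine integral_mono (int1.sub int2).abs (intd.const_mul _) (fun p => ?_)
          have := hg.dist_le_mul p.1 p.2
          rwa [Real.dist_eq] at this
      _ = c * ∫ p : X × X, dist p.1 p.2 ∂π := integral_const_mul _ _
  show |(∫ y, g y ∂μ) - ∫ y, g y ∂ν| ≤ (c : ℝ) * sInf S
  rw [show (c : ℝ) * sInf S = (c : ℝ) • sInf S from rfl,
    ← Real.sInf_smul_of_nonneg c.coe_nonneg]
  refine le_csInf hSne.smul_set ?_
  rintro _ ⟨r, hr, rfl⟩
  simpa [smul_eq_mul] using hkey r hr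

/-- gradient bound for the smoothed density: for every interior `x`,
`‖∇p̃(x) − ∇ρ(x)‖ ≤ m·L′·W₁(ν̂, ξ) + m·h·‖∇ρ‖_Lip`. Partial derivatives are expressed
via `fderivWithin` evaluated at the coordinate directions `EuclideanSpace.single i 1`. -/
theorem stmt_6 {m : ℕ} (a b : Fin m → ℝ) (hab : ∀ i, a i ≤ b i)
    (P : Set (EuclideanSpace ℝ (Fin m)))
    (hP : P = {x : EuclideanSpace ℝ (Fin m) | ∀ i, a i ≤ x i ∧ x i ≤ b i})
    (h : ℝ) (hh : 0 < h)
    (K : EuclideanSpace ℝ (Fin m) → EuclideanSpace ℝ (Fin m) → ℝ)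
    (hKnonneg : ∀ x ∈ P, ∀ y ∈ P, 0 ≤ K x y)
    (hKint : ∀ x ∈ P, ∫ y in P, K x y ∂volume = 1)
    (hKsupp : ∀ x ∈ P, ∀ y ∈ P, h < dist x y → K x y = 0)
    (L : NNReal) (hKLip : ∀ x ∈ P, LipschitzOnWith L (fun y => K x y) P)
    (hKdiff : ∀ y ∈ P, ContDiffOn ℝ 1 (fun x => K x y) P)
    (L' : NNReal)
    (hKLip' : ∀ x ∈ P, ∀ i : Fin m, LipschitzOnWith L'
      (fun y => fderivWithin ℝ (fun x' => K x' y) P x (EuclideanSpace.single i 1)) P)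
    (ρ : EuclideanSpace ℝ (Fin m) → ℝ) (hρnonneg : ∀ x ∈ P, 0 ≤ ρ x)
    (hρdiff : ContDiffOn ℝ 1 ρ P)
    (Lρ' : NNReal)
    (hρLip' : ∀ i : Fin m, LipschitzOnWith Lρ'
      (fun y => fderivWithin ℝ ρ P y (EuclideanSpace.single i 1)) P)
    (hIBP : ∀ x ∈ P, ∀ i : Fin m,
      ∫ y in P, (fderivWithin ℝ (fun x' => K x' y) P x (EuclideanSpace.single i 1)) * ρ y
          ∂volume
        = ∫ y in P, K x y * fderivWithin ℝ ρ P y (EuclideanSpace.single i 1) ∂volume)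
    (ξ : Measure (EuclideanSpace ℝ (Fin m))) [IsProbabilityMeasure ξ]
    (hξ : ξ = (volume.restrict P).withDensity (fun x => ENNReal.ofReal (ρ x)))
    (νhat : Measure (EuclideanSpace ℝ (Fin m))) [IsProbabilityMeasure νhat]
    (hνhat : νhat Pᶜ = 0) :
    ∀ x ∈ interior P,
      ‖fderivWithin ℝ (fun x' => ∫ y in P, K x' y ∂νhat) P x - fderivWithin ℝ ρ P x‖ ≤
        (m : ℝ) * (L' : ℝ) * W1 νhat ξ + (m : ℝ) * h * (Lρ' : ℝ) := by
  intro x hx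
  have hxP : x ∈ P := interior_subset hx
  -- basic facts about P
  have hPclosed : IsClosed P := by
    have : P = ⋂ i, (EuclideanSpace.proj (𝕜 := ℝ) i) ⁻¹' (Set.Icc (a i) (b i)) := by
      rw [hP]; ext y; simp [Set.mem_iInter, Set.mem_Icc]
    rw [this]
    exact isClosed_iInter fun i => isClosed_Icc.preimage (EuclideanSpace.proj i).continuous
  have hPm : MeasurableSet P := hPclosed.measurableSet
  have hPconv : Convex ℝ P := by
    rw [hP]
    intro u hu v hv α β hα hβ hαβ
    intro i
    have h1 : α • u + β • v ∈ (fun w : EuclideanSpace ℝ (Fin m) => w)  '' Set.univ := by simp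
    have hui := hu i
    have hvi := hv i
    constructor
    · have : a i = α * a i + β * a i := by rw [← add_mul, hαβ, one_mul]
      rw [this]
      show α * a i + β * a i ≤ (α • u + β • v) i
      have : (α • u + β • v) i = α * u i + β * v i := by
        simp [PiLp.add_apply, PiLp.smul_apply, smul_eq_mul]
      rw [this]
      gcongr <;> [exact hui.1; exact hvi.1]
    · have h2 : (α • u + β • v) i = α * u i + β * v i := by
        simp [PiLp.add_apply, PiLp.smul_apply, smul_eq_mul]
      rw [h2]
      have : b i = α * b i + β * b i := by rw [← add_mul, hαβ, one_mul]
      rw [this]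
      gcongr <;> [exact hui.2; exact hvi.2]
  have hPud : UniqueDiffOn ℝ P := uniqueDiffOn_convex hPconv ⟨x, hx⟩
  set Cd : ℝ := Real.sqrt (∑ i, (b i - a i)^2) with hCd
  have hCd0 : 0 ≤ Cd := Real.sqrt_nonneg _
  have hdiam : ∀ y ∈ P, ∀ z ∈ P, dist y z ≤ Cd := by
    intro y hy z hz
    rw [EuclideanSpace.dist_eq, hCd]
    apply Real.sqrt_le_sqrt
    refine Finset.sum_le_sum fun i _ => ?_
    rw [hP] at hy hz
    have h1 := hy i; have h2 := hz i
    have : |y i - z i| ≤ b i - a i := by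
      rw [abs_le]; constructor <;> linarith [h1.1, h1.2, h2.1, h2.2]
    calc dist (y i) (z i)^2 = |y i - z i|^2 := by rw [Real.dist_eq]
      _ ≤ (b i - a i)^2 := by
          apply pow_le_pow_left₀ (abs_nonneg _) this
  have hξc : ξ Pᶜ = 0 := by
    rw [hξ, withDensity_apply _ hPm.compl, Measure.restrict_restrict hPm.compl,
      Set.compl_inter_self, Measure.restrict_empty, lintegral_zero_measure]
  have hνres : νhat.restrict P = νhat :=
    Measure.restrict_eq_self_of_ae_mem (by rw [ae_iff]; exact hνhat)
  -- finiteness of volume on P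
  have hPfin : volume P < ⊤ := by
    have hsub : P ⊆ Metric.closedBall x Cd := by
      intro y hy
      rw [Metric.mem_closedBall]
      exact hdiam y hy x hxP
    exact lt_of_le_of_lt (measure_mono hsub) (MeasureTheory.measure_closedBall_lt_top)
  have : IsFiniteMeasure (volume.restrict P) :=
    ⟨by rw [Measure.restrict_apply_univ]; exact hPfin⟩
  -- derivative facts
  have hDW : ∀ x' ∈ interior P, ∀ y,
      fderivWithin ℝ (fun t => K t y) P x' = fderiv ℝ (fun t => K t y) x' := by
    intro x' hx' y
    exact fderivWithin_of_mem_nhds (mem_interior_iff_mem_nhds.mp hx')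
  have hρDW : fderivWithin ℝ ρ P x = fderiv ℝ ρ x :=
    fderivWithin_of_mem_nhds (mem_interior_iff_mem_nhds.mp hx)
  have hDdiff : ∀ y ∈ P, ∀ x' ∈ interior P,
      HasFDerivAt (fun t => K t y) (fderiv ℝ (fun t => K t y) x') x' := by
    intro y hy x' hx'
    have hdo : DifferentiableOn ℝ (fun t => K t y) P := (hKdiff y hy).differentiableOn one_ne_zero
    exact ((hdo x' (interior_subset hx')).differentiableAt
      (mem_interior_iff_mem_nhds.mp hx')).hasFDerivAt
  have hLipD : ∀ x' ∈ interior P, ∀ i : Fin m, LipschitzOnWith L'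
      (fun y => fderiv ℝ (fun t => K t y) x' (EuclideanSpace.single i 1)) P := by
    intro x' hx' i
    have hh' := hKLip' x' (interior_subset hx') i
    have : (fun y => fderivWithin ℝ (fun t => K t y) P x' (EuclideanSpace.single i 1))
        = fun y => fderiv ℝ (fun t => K t y) x' (EuclideanSpace.single i 1) := by
      funext y; rw [hDW x' hx' y]
    rwa [this] at hh'
  -- continuity of y ↦ D x' y
  have hDcont : ∀ x' ∈ interior P, ContinuousOn
      (fun y => fderiv ℝ (fun t => K t y) x') P := by
    intro x' hx'
    have : (fun y => fderiv ℝ (fun t => K t y) x') = fun y =>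
        ∑ i, (fderiv ℝ (fun t => K t y) x' (EuclideanSpace.single i 1)) •
          (EuclideanSpace.proj i : EuclideanSpace ℝ (Fin m) →L[ℝ] ℝ) := by
      funext y; exact aux_clm_decomp _
    rw [this]
    refine continuousOn_finset_sum _ fun i _ => ?_
    exact ((hLipD x' hx' i).continuousOn).smul continuousOn_const
  -- a ball around x inside interior P
  obtain ⟨ε, hε0, hεsub⟩ := Metric.isOpen_iff.mp isOpen_interior x hx
  set r : ℝ := ε / 2 with hrdef
  have hr0 : 0 < r := by positivity
  have hrball : Metric.closedBall x r ⊆ interior P :=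
    le_trans (Metric.closedBall_subset_ball (by rw [hrdef]; linarith)) hεsub
  -- bound on ‖D x' x‖ over the closed ball
  obtain ⟨C₀, hC₀⟩ := (isCompact_closedBall x r).exists_bound_of_continuousOn
    (f := fun x' => fderiv ℝ (fun t => K t x) x') (by
      have hcont : ContinuousOn (fun x' => fderivWithin ℝ (fun t => K t x) P x') P :=
        (hKdiff x hxP).continuousOn_fderivWithin hPud le_rfl
      have hsub : Metric.closedBall x r ⊆ P := le_trans hrball interior_subset
      refine (hcont.mono hsub).congr fun x' hx' => ?_
      exact (hDW x' (hrball hx') x).symm)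
  -- uniform bound on ‖D x' y‖
  set CB : ℝ := C₀ + m * (L' * Cd) with hCB
  have hDbound : ∀ y ∈ P, ∀ x' ∈ Metric.ball x r, ‖fderiv ℝ (fun t => K t y) x'‖ ≤ CB := by
    intro y hy x' hx'
    have hx'i : x' ∈ interior P := hrball (Metric.ball_subset_closedBall hx')
    have h1 : ‖fderiv ℝ (fun t => K t x) x'‖ ≤ C₀ := hC₀ x' (Metric.ball_subset_closedBall hx')
    have h2 : ‖fderiv ℝ (fun t => K t y) x' - fderiv ℝ (fun t => K t x) x'‖
        ≤ m * (L' * Cd) := by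
      refine aux_opnorm_le _ (by positivity) fun i => ?_
      rw [ContinuousLinearMap.sub_apply]
      have hl := (hLipD x' hx'i i).dist_le_mul y hy x hxP
      rw [Real.dist_eq] at hl
      refine le_trans hl ?_
      exact mul_le_mul_of_nonneg_left (hdiam y hy x hxP) L'.coe_nonneg
    calc ‖fderiv ℝ (fun t => K t y) x'‖
        = ‖(fderiv ℝ (fun t => K t y) x' - fderiv ℝ (fun t => K t x) x')
            + fderiv ℝ (fun t => K t x) x'‖ := by rw [sub_add_cancel]
      _ ≤ _ + _ := norm_add_le _ _
      _ ≤ m * (L' * Cd) + C₀ := add_le_add h2 h1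
      _ = CB := by rw [hCB]; ring
  -- differentiation under the integral sign
  have hKbound : ∀ x' ∈ P, ∀ y ∈ P, |K x' y| ≤ |K x' x| + L * Cd := by
    intro x' hx' y hy
    have hl := (hKLip x' hx').dist_le_mul y hy x hxP
    rw [Real.dist_eq] at hl
    have : (L : ℝ) * dist y x ≤ L * Cd :=
      mul_le_mul_of_nonneg_left (hdiam y hy x hxP) L.coe_nonneg
    have habs := abs_sub_abs_le_abs_sub (K x' y) (K x' x)
    linarith
  have hmeasK : ∀ x' ∈ P, AEStronglyMeasurable (fun y => K x' y) (νhat.restrict P) :=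
    fun x' hx' => ((hKLip x' hx').continuousOn).aestronglyMeasurable hPm
  have hFDeriv : HasFDerivAt (fun x' => ∫ y in P, K x' y ∂νhat)
      (∫ y in P, fderiv ℝ (fun t => K t y) x ∂νhat) x := by
    refine hasFDerivAt_integral_of_dominated_of_fderiv_le (hs := Metric.ball_mem_nhds x hr0)
      (bound := fun _ => CB)
      (F' := fun x' y => fderiv ℝ (fun t => K t y) x') ?_ ?_ ?_ ?_ ?_ ?_
    · filter_upwards [isOpen_interior.mem_nhds hx] with x' hx'
      exact hmeasK x' (interior_subset hx')
    · refine (integrable_const (|K x x| + L * Cd)).mono' (hmeasK x hxP) ?_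
      filter_upwards [ae_restrict_mem hPm] with y hy using hKbound x hxP y hy
    · exact (hDcont x hx).aestronglyMeasurable hPm
    · filter_upwards [ae_restrict_mem hPm] with y hy
      exact fun x' hx' => hDbound y hy x' hx'
    · exact integrable_const _
    · filter_upwards [ae_restrict_mem hPm] with y hy
      exact fun x' hx' => hDdiff y hy x' (hrball (Metric.ball_subset_closedBall hx'))
  have hIntD : Integrable (fun y => fderiv ℝ (fun t => K t y) x) (νhat.restrict P) := by
    refine (integrable_const CB).mono' ((hDcont x hx).aestronglyMeasurable hPm) ?_
    filter_upwards [ae_restrict_mem hPm] with y hy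
    exact hDbound y hy x (Metric.mem_ball_self hr0)
  have hfd : fderivWithin ℝ (fun x' => ∫ y in P, K x' y ∂νhat) P x
      = ∫ y in P, fderiv ℝ (fun t => K t y) x ∂νhat := by
    rw [fderivWithin_of_mem_nhds (mem_interior_iff_mem_nhds.mp hx)]
    exact hFDeriv.fderiv
  -- component-wise bound
  have hcomp : ∀ i : Fin m,
      |(fderivWithin ℝ (fun x' => ∫ y in P, K x' y ∂νhat) P x
        - fderivWithin ℝ ρ P x) (EuclideanSpace.single i 1)|
      ≤ (L' : ℝ) * W1 νhat ξ + h * (Lρ' : ℝ) := by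
    intro i
    set g : EuclideanSpace ℝ (Fin m) → ℝ :=
      fun y => fderivWithin ℝ ρ P y (EuclideanSpace.single i 1) with hg
    set f : EuclideanSpace ℝ (Fin m) → ℝ :=
      fun y => fderiv ℝ (fun t => K t y) x (EuclideanSpace.single i 1) with hf
    have hfLip : LipschitzOnWith L' f P := hLipD x hx i
    have step1 : (fderivWithin ℝ (fun x' => ∫ y in P, K x' y ∂νhat) P x
        - fderivWithin ℝ ρ P x) (EuclideanSpace.single i 1)
        = (∫ y, f y ∂νhat) - g x := by
      rw [ContinuousLinearMap.sub_apply, hfd,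
        ContinuousLinearMap.integral_apply hIntD (EuclideanSpace.single i 1), hνres]
    -- the ξ-integral of f
    have hρmeas : AEMeasurable (fun y => (ρ y).toNNReal) (volume.restrict P) :=
      (hρdiff.continuousOn.aemeasurable hPm).real_toNNReal
    have step2 : ∫ y, f y ∂ξ = ∫ y in P, K x y * g y ∂volume := by
      have e1 : ∫ y, f y ∂ξ = ∫ y in P, ((ρ y).toNNReal : ℝ) • f y ∂volume := by
        rw [hξ]
        exact integral_withDensity_eq_integral_smul₀ hρmeas f
      rw [e1]
      have e2 : ∫ y in P, ((ρ y).toNNReal : ℝ) • f y ∂volume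
          = ∫ y in P, (fderivWithin ℝ (fun x' => K x' y) P x
              (EuclideanSpace.single i 1)) * ρ y ∂volume := by
        refine integral_congr_ae ?_
        filter_upwards [ae_restrict_mem hPm] with y hy
        rw [smul_eq_mul, Real.coe_toNNReal _ (hρnonneg y hy), hDW x hx y, mul_comm]
      rw [e2, hIBP x hxP i]
    -- bounds on |g|, |K x ·|
    have hgLip := hρLip' i
    have hgbound : ∀ y ∈ P, |g y| ≤ |g x| + Lρ' * Cd := by
      intro y hy
      have hl := hgLip.dist_le_mul y hy x hxP
      rw [Real.dist_eq] at hl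
      have : (Lρ' : ℝ) * dist y x ≤ Lρ' * Cd :=
        mul_le_mul_of_nonneg_left (hdiam y hy x hxP) Lρ'.coe_nonneg
      have habs := abs_sub_abs_le_abs_sub (g y) (g x)
      linarith
    have intK : Integrable (fun y => K x y) (volume.restrict P) := by
      refine (integrable_const (|K x x| + L * Cd)).mono'
        (((hKLip x hxP).continuousOn).aestronglyMeasurable hPm) ?_
      filter_upwards [ae_restrict_mem hPm] with y hy using hKbound x hxP y hy
    have intKg : Integrable (fun y => K x y * g y) (volume.restrict P) := by
      refine (integrable_const ((|K x x| + L * Cd) * (|g x| + Lρ' * Cd))).mono'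
        ((((hKLip x hxP).continuousOn).mul (hgLip.continuousOn)).aestronglyMeasurable hPm) ?_
      filter_upwards [ae_restrict_mem hPm] with y hy
      rw [Real.norm_eq_abs, abs_mul]
      have h1 := hKbound x hxP y hy
      have h2 := hgbound y hy
      have h3 : (0:ℝ) ≤ |K x x| + L * Cd := le_trans (abs_nonneg _) h1
      exact mul_le_mul h1 h2 (abs_nonneg _) h3
    have e0 : ∫ y in P, K x y * g x ∂volume = g x := by
      rw [integral_mul_const, hKint x hxP, one_mul]
    have step3 : |(∫ y in P, K x y * g y ∂volume) - g x| ≤ h * (Lρ' : ℝ) := by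
      rw [← e0, ← integral_sub intKg (intK.mul_const (g x))]
      calc |∫ y in P, (K x y * g y - K x y * g x) ∂volume|
          ≤ ∫ y in P, |K x y * g y - K x y * g x| ∂volume := by
            simpa [Real.norm_eq_abs] using norm_integral_le_integral_norm
              (μ := volume.restrict P) (fun y => K x y * g y - K x y * g x)
        _ ≤ ∫ y in P, K x y * ((Lρ' : ℝ) * h) ∂volume := by
            refine integral_mono_ae ((intKg.sub (intK.mul_const (g x))).abs)
              (intK.mul_const _) ?_
            filter_upwards [ae_restrict_mem hPm] with y hy
            have hKy : 0 ≤ K x y := hKnonneg x hxP y hy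
            rw [← mul_sub, abs_mul, abs_of_nonneg hKy]
            by_cases hdy : dist x y ≤ h
            · refine mul_le_mul_of_nonneg_left ?_ hKy
              have hl := hgLip.dist_le_mul y hy x hxP
              rw [Real.dist_eq] at hl
              refine le_trans hl ?_
              rw [dist_comm] at hdy
              exact mul_le_mul_of_nonneg_left hdy Lρ'.coe_nonneg
            · rw [hKsupp x hxP y hy (lt_of_not_ge hdy)]
              simp [mul_nonneg Lρ'.coe_nonneg (le_of_lt hh)]
        _ = (∫ y in P, K x y ∂volume) * ((Lρ' : ℝ) * h) := integral_mul_const _ _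
        _ = h * (Lρ' : ℝ) := by rw [hKint x hxP]; ring
    have step4 : |(∫ y, f y ∂νhat) - ∫ y, f y ∂ξ| ≤ (L' : ℝ) * W1 νhat ξ :=
      aux_coupling_bound hPm hdiam νhat ξ hνhat hξc hfLip
    rw [step1]
    calc |(∫ y, f y ∂νhat) - g x|
        ≤ |(∫ y, f y ∂νhat) - ∫ y, f y ∂ξ| + |(∫ y, f y ∂ξ) - g x| :=
          abs_sub_le _ _ _
      _ ≤ (L' : ℝ) * W1 νhat ξ + h * (Lρ' : ℝ) := by
          refine add_le_add step4 ?_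
          rw [step2]
          exact step3
  -- conclusion
  have hfinal := aux_opnorm_le
    (fderivWithin ℝ (fun x' => ∫ y in P, K x' y ∂νhat) P x - fderivWithin ℝ ρ P x)
    (C := (L' : ℝ) * W1 νhat ξ + h * (Lρ' : ℝ))
    (by
      have := aux_W1_nonneg νhat ξ
      positivity)
    hcomp
  refine le_trans hfinal (le_of_eq ?_)
  ring
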